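/- arXiv:math/9812161 — 2 statements merged into one kernel-verified Lean document; each statement's English description precedes it below -/
import Mathlib

section
/- Let ℓ be a positive integer, τ ∈ ℂ with Im τ > 0, η ∈ ℂ, and let M be a positive integer. Suppose v : ℂ×ℂ → ℂ satisfies θ1(2y)·[θ1(2x−2ℓη)v(x+η,y) + θ1(2x+2ℓη)v(x−η,y)] = θ1(2x)·[θ1(2y−2ℓη)v(x,y+η) + θ1(2y+2ℓη)v(x,y−η)] for all x,y ∈ ℂ, and that v(x, x+jη) = 0 for all x ∈ ℂ whenever j ∈ ℤ with |j| > M. Define V_j(x) = v(x, x+jη) / ∏_{k=1}^{ℓ} [θ1(2x+2(j−k)η)·θ1(2x+2(j+k)η)] and (Vf)(x) = Σ_{j=−M}^{M} V_j(x) f(x+jη). Then for every f : ℂ → ℂ and every x ∈ ℂ at which all theta-denominators occurring on both sides are nonzero, (L(Vf))(x) = (V(Lf))(x), where (Lg)(x) = [θ1(2x−2ℓη)g(x+η) + θ1(2x+2ℓη)g(x−η)]/θ1(2x). -/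
open Complex Finset

/-- Jacobi theta function θ₁(x|τ). -/
noncomputable def theta1 (τ x : ℂ) : ℂ :=
  ∑' k : ℤ, Complex.exp ((Real.pi : ℂ) * Complex.I * τ * ((k : ℂ) + 1/2)^2 +
    2 * (Real.pi : ℂ) * Complex.I * (x + 1/2) * ((k : ℂ) + 1/2))

/-- Elliptic number [n] = θ₁(2nη). -/
noncomputable def en (τ η : ℂ) (n : ℤ) : ℂ := theta1 τ (2 * (n : ℂ) * η)

/-- Elliptic factorial [n]! = ∏_{j=1}^n [j]. -/
noncomputable def efact (τ η : ℂ) (n : ℕ) : ℂ := ∏ j ∈ Finset.range n, en τ η ((j : ℤ) + 1)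

/-- Elliptic binomial coefficient [n over m]. -/
noncomputable def ebinom (τ η : ℂ) (n m : ℕ) : ℂ :=
  efact τ η n / (efact τ η m * efact τ η (n - m))

/-- Φ(x,ζ) = θ₁(ζ+x)/(θ₁(x)θ₁(ζ)). -/
noncomputable def Phi (τ x ζ : ℂ) : ℂ := theta1 τ (ζ + x) / (theta1 τ x * theta1 τ ζ)

/-- The polynomials A_{(ℓ−s)η}(E), indexed by s = 0, 1, …, ℓ;
`Apoly τ η ℓ E s = A_{(ℓ−s)η}(E)`. -/
noncomputable def Apoly (τ η : ℂ) (ℓ : ℕ) (E : ℂ) : ℕ → ℂ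
  | 0 => 1
  | 1 => en τ η (ℓ : ℤ) / en τ η (2 * (ℓ : ℤ)) * E
  | (s + 2) =>
      en τ η ((ℓ : ℤ) - (s + 1)) / en τ η (2 * (ℓ : ℤ) - (s + 1)) * E *
        Apoly τ η ℓ E (s + 1)
      + en τ η ((s : ℤ) + 1) / en τ η (2 * (ℓ : ℤ) - (s + 1)) * Apoly τ η ℓ E s

/-- The coefficient A_k(x,λ) of the commuting difference operator A_λ. -/
noncomputable def Acoef (τ η : ℂ) (ℓ : ℕ) (k : ℕ) (x lam : ℂ) : ℂ :=
  (-1 : ℂ)^k * (efact τ η ℓ / efact τ η (2*ℓ)) * ebinom τ η ℓ k *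
  (∏ j ∈ Finset.range (ℓ - k),
     theta1 τ (2*x + 2*((ℓ : ℂ) - (j : ℂ))*η) * theta1 τ (2*lam + 2*((ℓ : ℂ) - (j : ℂ))*η) /
       theta1 τ (2*x + 2*lam + 2*((k : ℂ) - (j : ℂ))*η)) *
  (∏ j ∈ Finset.range k,
     theta1 τ (2*x - 2*((ℓ : ℂ) - (j : ℂ))*η) * theta1 τ (2*lam - 2*((ℓ : ℂ) - (j : ℂ))*η) /
       theta1 τ (2*x + 2*lam + 2*((k : ℂ) + (j : ℂ) - (ℓ : ℂ))*η))

/-- The difference operator A_λ acting on functions: (A_λ f)(x) = Σ_k A_k(x,λ) f(x+(2k−ℓ)η+λ). -/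
noncomputable def Aop (τ η : ℂ) (ℓ : ℕ) (lam : ℂ) (f : ℂ → ℂ) (x : ℂ) : ℂ :=
  ∑ k ∈ Finset.range (ℓ + 1), Acoef τ η ℓ k x lam * f (x + (2*(k : ℂ) - (ℓ : ℂ))*η + lam)

/-- All theta-denominators occurring in the coefficients A_k(x,λ) are nonzero. -/
def domAcoef (τ η : ℂ) (ℓ : ℕ) (x lam : ℂ) : Prop :=
  ∀ k ∈ Finset.range (ℓ + 1),
    (∀ j ∈ Finset.range (ℓ - k), theta1 τ (2*x + 2*lam + 2*((k : ℂ) - (j : ℂ))*η) ≠ 0) ∧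
    (∀ j ∈ Finset.range k, theta1 τ (2*x + 2*lam + 2*((k : ℂ) + (j : ℂ) - (ℓ : ℂ))*η) ≠ 0)

/-- The space Θ⁺_{4ℓ} of even theta functions of order 4ℓ. -/
def ThetaPlus (τ : ℂ) (ℓ : ℕ) (F : ℂ → ℂ) : Prop :=
  Differentiable ℂ F ∧
  (∀ x, F (x + 1) = F x) ∧
  (∀ x, F (x + τ) = Complex.exp (-4*(Real.pi : ℂ)*Complex.I*(ℓ : ℂ)*τ
      - 8*(Real.pi : ℂ)*Complex.I*(ℓ : ℂ)*x) * F x) ∧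
  (∀ x, F (-x) = F x)

/-- The coefficient V_j(x) = v(x, x+jη) / ∏_{k=1}^ℓ [θ₁(2x+2(j−k)η)·θ₁(2x+2(j+k)η)]. -/
noncomputable def Vcoef (τ η : ℂ) (ℓ : ℕ) (v : ℂ → ℂ → ℂ) (j : ℤ) (x : ℂ) : ℂ :=
  v x (x + (j : ℂ)*η) /
    ∏ k ∈ Finset.Icc 1 ℓ,
      (theta1 τ (2*x + 2*((j : ℂ) - (k : ℂ))*η) * theta1 τ (2*x + 2*((j : ℂ) + (k : ℂ))*η))

/-- All theta-denominators occurring in the coefficients V_j at x are nonzero. -/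
def domVcoef (τ η : ℂ) (ℓ : ℕ) (M : ℕ) (x : ℂ) : Prop :=
  ∀ j ∈ Finset.Icc (-(M : ℤ)) (M : ℤ), ∀ k ∈ Finset.Icc 1 ℓ,
    theta1 τ (2*x + 2*((j : ℂ) - (k : ℂ))*η) ≠ 0 ∧
    theta1 τ (2*x + 2*((j : ℂ) + (k : ℂ))*η) ≠ 0

lemma prod_shift (t : ℤ → ℂ) (m : ℤ) (ℓ : ℕ) :
    t m * (∏ k ∈ Finset.Icc 1 ℓ, t (m - (k:ℤ)) * t (m + (k:ℤ))) * t (m + 1 + (ℓ:ℤ))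
    = t (m + 1) * (∏ k ∈ Finset.Icc 1 ℓ, t (m + 1 - (k:ℤ)) * t (m + 1 + (k:ℤ))) * t (m - (ℓ:ℤ)) := by
  induction ℓ with
  | zero => simp; ring
  | succ n ih =>
    rw [Finset.prod_Icc_succ_top (Nat.le_add_left 1 n), Finset.prod_Icc_succ_top (Nat.le_add_left 1 n)]
    push_cast
    rw [show m + ((n:ℤ)+1) = m + 1 + (n:ℤ) by ring, show m + 1 - ((n:ℤ)+1) = m - (n:ℤ) by ring]
    linear_combination (t (m - ((n:ℤ)+1)) * t (m + 1 + ((n:ℤ)+1))) * ih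

lemma prod_shift' (t : ℤ → ℂ) (m : ℤ) (ℓ : ℕ) :
    t m * (∏ k ∈ Finset.Icc 1 ℓ, t (m - (k:ℤ)) * t (m + (k:ℤ))) * t (m - 1 - (ℓ:ℤ))
    = t (m - 1) * (∏ k ∈ Finset.Icc 1 ℓ, t (m - 1 - (k:ℤ)) * t (m - 1 + (k:ℤ))) * t (m + (ℓ:ℤ)) := by
  induction ℓ with
  | zero => simp; ring
  | succ n ih =>
    rw [Finset.prod_Icc_succ_top (Nat.le_add_left 1 n), Finset.prod_Icc_succ_top (Nat.le_add_left 1 n)]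
    push_cast
    rw [show m - ((n:ℤ)+1) = m - 1 - (n:ℤ) by ring, show m - 1 + ((n:ℤ)+1) = m + (n:ℤ) by ring]
    linear_combination (t (m + ((n:ℤ)+1)) * t (m - 1 - ((n:ℤ)+1))) * ih

lemma keyGeneric (t : ℤ → ℂ) (ℓ : ℕ) (m : ℤ) (a b c d : ℂ)
    (h0 : t 0 ≠ 0) (hm : t m ≠ 0) (hm1 : t (m-1) ≠ 0) (hp1 : t (m+1) ≠ 0)
    (hQm : (∏ k ∈ Finset.Icc 1 ℓ, t (m-(k:ℤ)) * t (m+(k:ℤ))) ≠ 0)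
    (hQm1 : (∏ k ∈ Finset.Icc 1 ℓ, t (m-1-(k:ℤ)) * t (m-1+(k:ℤ))) ≠ 0)
    (hQp1 : (∏ k ∈ Finset.Icc 1 ℓ, t (m+1-(k:ℤ)) * t (m+1+(k:ℤ))) ≠ 0)
    (hv : t m * (t (-(ℓ:ℤ)) * a + t (ℓ:ℤ) * b) = t 0 * (t (m - (ℓ:ℤ)) * d + t (m + (ℓ:ℤ)) * c)) :
    (t (-(ℓ:ℤ)) * (a / ∏ k ∈ Finset.Icc 1 ℓ, t (m-(k:ℤ)) * t (m+(k:ℤ)))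
      + t (ℓ:ℤ) * (b / ∏ k ∈ Finset.Icc 1 ℓ, t (m-(k:ℤ)) * t (m+(k:ℤ)))) / t 0
    = c / (∏ k ∈ Finset.Icc 1 ℓ, t (m-1-(k:ℤ)) * t (m-1+(k:ℤ))) * (t (m-1-(ℓ:ℤ)) / t (m-1))
      + d / (∏ k ∈ Finset.Icc 1 ℓ, t (m+1-(k:ℤ)) * t (m+1+(k:ℤ))) * (t (m+1+(ℓ:ℤ)) / t (m+1)) := by
  have e1 := prod_shift t m ℓ
  have e2 := prod_shift' t m ℓ
  set P := ∏ k ∈ Finset.Icc 1 ℓ, t (m-(k:ℤ)) * t (m+(k:ℤ)) with hP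
  set Pm := ∏ k ∈ Finset.Icc 1 ℓ, t (m-1-(k:ℤ)) * t (m-1+(k:ℤ)) with hPm
  set Pp := ∏ k ∈ Finset.Icc 1 ℓ, t (m+1-(k:ℤ)) * t (m+1+(k:ℤ)) with hPp
  have h2 : (t (-(ℓ:ℤ)) * (a / P) + t (ℓ:ℤ) * (b / P)) / t 0
      = (t (m - (ℓ:ℤ)) * d + t (m + (ℓ:ℤ)) * c) / (t m * P) := by
    rw [div_eq_div_iff h0 (mul_ne_zero hm hQm)]
    field_simp
    linear_combination hv
  have h3 : t (m - (ℓ:ℤ)) * d / (t m * P) = d / Pp * (t (m+1+(ℓ:ℤ)) / t (m+1)) := by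
    rw [div_mul_div_comm, div_eq_div_iff (mul_ne_zero hm hQm) (mul_ne_zero hQp1 hp1)]
    linear_combination (-d) * e1
  have h4 : t (m + (ℓ:ℤ)) * c / (t m * P) = c / Pm * (t (m-1-(ℓ:ℤ)) / t (m-1)) := by
    rw [div_mul_div_comm, div_eq_div_iff (mul_ne_zero hm hQm) (mul_ne_zero hQm1 hm1)]
    linear_combination (-c) * e2
  rw [h2, add_div, h3, h4]
  exact add_comm _ _

lemma keyEdgeR (t : ℤ → ℂ) (ℓ : ℕ) (m : ℤ) (a c : ℂ)
    (h0 : t 0 ≠ 0) (hm : t m ≠ 0) (hm1 : t (m-1) ≠ 0)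
    (hQm : (∏ k ∈ Finset.Icc 1 ℓ, t (m-(k:ℤ)) * t (m+(k:ℤ))) ≠ 0)
    (hQm1 : (∏ k ∈ Finset.Icc 1 ℓ, t (m-1-(k:ℤ)) * t (m-1+(k:ℤ))) ≠ 0)
    (hv : t m * (t (-(ℓ:ℤ)) * a) = t 0 * (t (m + (ℓ:ℤ)) * c)) :
    t (-(ℓ:ℤ)) * (a / ∏ k ∈ Finset.Icc 1 ℓ, t (m-(k:ℤ)) * t (m+(k:ℤ))) / t 0
    = c / (∏ k ∈ Finset.Icc 1 ℓ, t (m-1-(k:ℤ)) * t (m-1+(k:ℤ))) * (t (m-1-(ℓ:ℤ)) / t (m-1)) := by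
  have e2 := prod_shift' t m ℓ
  set P := ∏ k ∈ Finset.Icc 1 ℓ, t (m-(k:ℤ)) * t (m+(k:ℤ)) with hP
  set Pm := ∏ k ∈ Finset.Icc 1 ℓ, t (m-1-(k:ℤ)) * t (m-1+(k:ℤ)) with hPm
  have h2 : t (-(ℓ:ℤ)) * (a / P) / t 0 = t (m + (ℓ:ℤ)) * c / (t m * P) := by
    rw [div_eq_div_iff h0 (mul_ne_zero hm hQm)]
    field_simp
    linear_combination hv
  have h4 : t (m + (ℓ:ℤ)) * c / (t m * P) = c / Pm * (t (m-1-(ℓ:ℤ)) / t (m-1)) := by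
    rw [div_mul_div_comm, div_eq_div_iff (mul_ne_zero hm hQm) (mul_ne_zero hQm1 hm1)]
    linear_combination (-c) * e2
  rw [h2, h4]

lemma keyEdgeL (t : ℤ → ℂ) (ℓ : ℕ) (m : ℤ) (b d : ℂ)
    (h0 : t 0 ≠ 0) (hm : t m ≠ 0) (hp1 : t (m+1) ≠ 0)
    (hQm : (∏ k ∈ Finset.Icc 1 ℓ, t (m-(k:ℤ)) * t (m+(k:ℤ))) ≠ 0)
    (hQp1 : (∏ k ∈ Finset.Icc 1 ℓ, t (m+1-(k:ℤ)) * t (m+1+(k:ℤ))) ≠ 0)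
    (hv : t m * (t (ℓ:ℤ) * b) = t 0 * (t (m - (ℓ:ℤ)) * d)) :
    t (ℓ:ℤ) * (b / ∏ k ∈ Finset.Icc 1 ℓ, t (m-(k:ℤ)) * t (m+(k:ℤ))) / t 0
    = d / (∏ k ∈ Finset.Icc 1 ℓ, t (m+1-(k:ℤ)) * t (m+1+(k:ℤ))) * (t (m+1+(ℓ:ℤ)) / t (m+1)) := by
  have e1 := prod_shift t m ℓ
  set P := ∏ k ∈ Finset.Icc 1 ℓ, t (m-(k:ℤ)) * t (m+(k:ℤ)) with hP
  set Pp := ∏ k ∈ Finset.Icc 1 ℓ, t (m+1-(k:ℤ)) * t (m+1+(k:ℤ)) with hPp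
  have h2 : t (ℓ:ℤ) * (b / P) / t 0 = t (m - (ℓ:ℤ)) * d / (t m * P) := by
    rw [div_eq_div_iff h0 (mul_ne_zero hm hQm)]
    field_simp
    linear_combination hv
  have h3 : t (m - (ℓ:ℤ)) * d / (t m * P) = d / Pp * (t (m+1+(ℓ:ℤ)) / t (m+1)) := by
    rw [div_mul_div_comm, div_eq_div_iff (mul_ne_zero hm hQm) (mul_ne_zero hQp1 hp1)]
    linear_combination (-d) * e1
  rw [h2, h3]

lemma bigstep (ℓ M : ℕ) (hℓ : 0 < ℓ) (hM : 0 < M) (t : ℤ → ℂ) (u : ℤ → ℤ → ℂ) (F : ℤ → ℂ)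
    (hv : ∀ m : ℤ, t m * (t (-(ℓ:ℤ)) * u 1 m + t (ℓ:ℤ) * u (-1) m)
        = t 0 * (t (m - (ℓ:ℤ)) * u 0 (m+1) + t (m + (ℓ:ℤ)) * u 0 (m-1)))
    (hz : ∀ i j : ℤ, (M:ℤ) < |j - i| → u i j = 0)
    (h0 : t 0 ≠ 0)
    (hdp : ∀ j ∈ Finset.Icc (-(M:ℤ)) (M:ℤ), ∀ k ∈ Finset.Icc 1 ℓ, t (j+1-(k:ℤ)) ≠ 0 ∧ t (j+1+(k:ℤ)) ≠ 0)
    (hdm : ∀ j ∈ Finset.Icc (-(M:ℤ)) (M:ℤ), ∀ k ∈ Finset.Icc 1 ℓ, t (j-1-(k:ℤ)) ≠ 0 ∧ t (j-1+(k:ℤ)) ≠ 0)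
    (hdc : ∀ j ∈ Finset.Icc (-(M:ℤ)) (M:ℤ), ∀ k ∈ Finset.Icc 1 ℓ, t (j-(k:ℤ)) ≠ 0 ∧ t (j+(k:ℤ)) ≠ 0)
    (hdj : ∀ j ∈ Finset.Icc (-(M:ℤ)) (M:ℤ), t j ≠ 0) :
    (t (-(ℓ:ℤ)) * ∑ j ∈ Finset.Icc (-(M:ℤ)) (M:ℤ),
        u 1 (j+1) / (∏ k ∈ Finset.Icc 1 ℓ, t (j+1-(k:ℤ)) * t (j+1+(k:ℤ))) * F (j+1)
      + t (ℓ:ℤ) * ∑ j ∈ Finset.Icc (-(M:ℤ)) (M:ℤ),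
        u (-1) (j-1) / (∏ k ∈ Finset.Icc 1 ℓ, t (j-1-(k:ℤ)) * t (j-1+(k:ℤ))) * F (j-1)) / t 0
    = ∑ j ∈ Finset.Icc (-(M:ℤ)) (M:ℤ),
        u 0 j / (∏ k ∈ Finset.Icc 1 ℓ, t (j-(k:ℤ)) * t (j+(k:ℤ))) *
          ((t (j - (ℓ:ℤ)) * F (j+1) + t (j + (ℓ:ℤ)) * F (j-1)) / t j) := by
  classical
  -- nonvanishing helpers on the extended range
  have h1k : (1:ℕ) ∈ Finset.Icc 1 ℓ := Finset.mem_Icc.mpr ⟨le_refl 1, hℓ⟩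
  have htj : ∀ n : ℤ, -(M:ℤ)-1 ≤ n → n ≤ (M:ℤ)+1 → t n ≠ 0 := by
    intro n hn1 hn2
    rcases lt_or_ge n (-(M:ℤ)) with h | h
    · have hn : n = -(M:ℤ)-1 := by omega
      have h' := (hdc (-(M:ℤ)) (Finset.mem_Icc.mpr (by omega)) 1 h1k).1
      rw [hn]; simpa using h'
    rcases le_or_gt n (M:ℤ) with h' | h'
    · exact hdj n (Finset.mem_Icc.mpr ⟨h, h'⟩)
    · have hn : n = (M:ℤ)+1 := by omega
      have h'' := (hdc (M:ℤ) (Finset.mem_Icc.mpr (by omega)) 1 h1k).2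
      rw [hn]; simpa using h''
  have hQne : ∀ n : ℤ, -(M:ℤ)-1 ≤ n → n ≤ (M:ℤ)+1 →
      (∏ k ∈ Finset.Icc 1 ℓ, t (n-(k:ℤ)) * t (n+(k:ℤ))) ≠ 0 := by
    intro n hn1 hn2
    rw [Finset.prod_ne_zero_iff]
    intro k hk
    rcases lt_or_ge n (-(M:ℤ)) with h | h
    · have hn : n = -(M:ℤ)-1 := by omega
      obtain ⟨e1, e2⟩ := hdm (-(M:ℤ)) (Finset.mem_Icc.mpr (by omega)) k hk
      rw [hn]; exact mul_ne_zero e1 e2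
    rcases le_or_gt n (M:ℤ) with h' | h'
    · obtain ⟨e1, e2⟩ := hdc n (Finset.mem_Icc.mpr ⟨h, h'⟩) k hk
      exact mul_ne_zero e1 e2
    · have hn : n = (M:ℤ)+1 := by omega
      obtain ⟨e1, e2⟩ := hdp (M:ℤ) (Finset.mem_Icc.mpr (by omega)) k hk
      rw [hn]; exact mul_ne_zero e1 e2
  -- shifting sums
  have shift1 : ∀ g : ℤ → ℂ,
      (∀ m ∈ Finset.Icc (-(M:ℤ)-1) ((M:ℤ)+1), m ∉ Finset.Icc (-(M:ℤ)+1) ((M:ℤ)+1) → g m = 0) →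
      ∑ j ∈ Finset.Icc (-(M:ℤ)) (M:ℤ), g (j+1) = ∑ m ∈ Finset.Icc (-(M:ℤ)-1) ((M:ℤ)+1), g m := by
    intro g hg
    have e : ∑ j ∈ Finset.Icc (-(M:ℤ)) (M:ℤ), g (j+1)
        = ∑ m ∈ Finset.Icc (-(M:ℤ)+1) ((M:ℤ)+1), g m := by
      rw [show Finset.Icc (-(M:ℤ)+1) ((M:ℤ)+1)
            = (Finset.Icc (-(M:ℤ)) (M:ℤ)).map (addRightEmbedding 1) from
          (Finset.map_add_right_Icc _ _ _).symm, Finset.sum_map]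
      simp [addRightEmbedding_apply]
    rw [e]
    exact Finset.sum_subset (fun m hm => by simp only [Finset.mem_Icc] at *; omega) hg
  have shift2 : ∀ g : ℤ → ℂ,
      (∀ m ∈ Finset.Icc (-(M:ℤ)-1) ((M:ℤ)+1), m ∉ Finset.Icc (-(M:ℤ)-1) ((M:ℤ)-1) → g m = 0) →
      ∑ j ∈ Finset.Icc (-(M:ℤ)) (M:ℤ), g (j-1) = ∑ m ∈ Finset.Icc (-(M:ℤ)-1) ((M:ℤ)+1), g m := by
    intro g hg
    have e : ∑ j ∈ Finset.Icc (-(M:ℤ)) (M:ℤ), g (j-1)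
        = ∑ m ∈ Finset.Icc (-(M:ℤ)-1) ((M:ℤ)-1), g m := by
      rw [show Finset.Icc (-(M:ℤ)-1) ((M:ℤ)-1)
            = (Finset.Icc (-(M:ℤ)) (M:ℤ)).map (addRightEmbedding (-1)) from ?_, Finset.sum_map]
      · simp [addRightEmbedding_apply, sub_eq_add_neg]
      · rw [Finset.map_add_right_Icc]; congr 1 <;> ring
    rw [e]
    exact Finset.sum_subset (fun m hm => by simp only [Finset.mem_Icc] at *; omega) hg
  -- rewrite the three sums over the extended range
  have c1 : ∑ j ∈ Finset.Icc (-(M:ℤ)) (M:ℤ),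
        u 1 (j+1) / (∏ k ∈ Finset.Icc 1 ℓ, t (j+1-(k:ℤ)) * t (j+1+(k:ℤ))) * F (j+1)
      = ∑ m ∈ Finset.Icc (-(M:ℤ)-1) ((M:ℤ)+1),
        u 1 m / (∏ k ∈ Finset.Icc 1 ℓ, t (m-(k:ℤ)) * t (m+(k:ℤ))) * F m := by
    exact shift1 (fun m => u 1 m / (∏ k ∈ Finset.Icc 1 ℓ, t (m-(k:ℤ)) * t (m+(k:ℤ))) * F m)
      (fun m hm hnm => by
        have hu : u 1 m = 0 := hz 1 m (by
          refine lt_abs.mpr (Or.inr ?_)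
          simp only [Finset.mem_Icc] at hm hnm
          omega)
        simp [hu])
  have c2 : ∑ j ∈ Finset.Icc (-(M:ℤ)) (M:ℤ),
        u (-1) (j-1) / (∏ k ∈ Finset.Icc 1 ℓ, t (j-1-(k:ℤ)) * t (j-1+(k:ℤ))) * F (j-1)
      = ∑ m ∈ Finset.Icc (-(M:ℤ)-1) ((M:ℤ)+1),
        u (-1) m / (∏ k ∈ Finset.Icc 1 ℓ, t (m-(k:ℤ)) * t (m+(k:ℤ))) * F m := by
    exact shift2 (fun m => u (-1) m / (∏ k ∈ Finset.Icc 1 ℓ, t (m-(k:ℤ)) * t (m+(k:ℤ))) * F m)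
      (fun m hm hnm => by
        have hu : u (-1) m = 0 := hz (-1) m (by
          refine lt_abs.mpr (Or.inl ?_)
          simp only [Finset.mem_Icc] at hm hnm
          omega)
        simp [hu])
  have c3 : ∑ j ∈ Finset.Icc (-(M:ℤ)) (M:ℤ),
        u 0 j / (∏ k ∈ Finset.Icc 1 ℓ, t (j-(k:ℤ)) * t (j+(k:ℤ))) *
          ((t (j - (ℓ:ℤ)) * F (j+1) + t (j + (ℓ:ℤ)) * F (j-1)) / t j)
      = (∑ m ∈ Finset.Icc (-(M:ℤ)-1) ((M:ℤ)+1),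
          u 0 (m-1) / (∏ k ∈ Finset.Icc 1 ℓ, t (m-1-(k:ℤ)) * t (m-1+(k:ℤ))) *
            (t (m-1-(ℓ:ℤ)) / t (m-1)) * F m)
        + (∑ m ∈ Finset.Icc (-(M:ℤ)-1) ((M:ℤ)+1),
          u 0 (m+1) / (∏ k ∈ Finset.Icc 1 ℓ, t (m+1-(k:ℤ)) * t (m+1+(k:ℤ))) *
            (t (m+1+(ℓ:ℤ)) / t (m+1)) * F m) := by
    rw [← shift1 (fun m => u 0 (m-1) / (∏ k ∈ Finset.Icc 1 ℓ, t (m-1-(k:ℤ)) * t (m-1+(k:ℤ))) *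
            (t (m-1-(ℓ:ℤ)) / t (m-1)) * F m)
          (fun m hm hnm => by
            have hu : u 0 (m-1) = 0 := hz 0 (m-1) (by
              refine lt_abs.mpr (Or.inr ?_)
              simp only [Finset.mem_Icc] at hm hnm
              omega)
            simp [hu]),
        ← shift2 (fun m => u 0 (m+1) / (∏ k ∈ Finset.Icc 1 ℓ, t (m+1-(k:ℤ)) * t (m+1+(k:ℤ))) *
            (t (m+1+(ℓ:ℤ)) / t (m+1)) * F m)
          (fun m hm hnm => by
            have hu : u 0 (m+1) = 0 := hz 0 (m+1) (by
              refine lt_abs.mpr (Or.inl ?_)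
              simp only [Finset.mem_Icc] at hm hnm
              omega)
            simp [hu]),
        ← Finset.sum_add_distrib]
    refine Finset.sum_congr rfl fun j hj => ?_
    simp only [show ∀ z : ℤ, z + 1 - 1 = z from fun z => by ring,
      show ∀ z : ℤ, z - 1 + 1 = z from fun z => by ring]
    ring
  rw [c1, c2, c3, Finset.mul_sum, Finset.mul_sum, ← Finset.sum_add_distrib, Finset.sum_div,
    ← Finset.sum_add_distrib]
  refine Finset.sum_congr rfl fun m hm => ?_
  simp only [Finset.mem_Icc] at hm
  obtain ⟨hm1, hm2⟩ := hm
  rcases le_or_gt (M:ℤ) m with hR | hR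
  · -- right edge : b = d = 0
    have hb : u (-1) m = 0 := hz (-1) m (lt_abs.mpr (Or.inl (by omega)))
    have hd : u 0 (m+1) = 0 := hz 0 (m+1) (lt_abs.mpr (Or.inl (by omega)))
    have hvm := hv m
    rw [hb, hd] at hvm
    have hvm' : t m * (t (-(ℓ:ℤ)) * u 1 m) = t 0 * (t (m + (ℓ:ℤ)) * u 0 (m-1)) := by
      linear_combination hvm
    have E := keyEdgeR t ℓ m (u 1 m) (u 0 (m-1)) h0 (htj m (by omega) (by omega))
      (htj (m-1) (by omega) (by omega)) (hQne m (by omega) (by omega))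
      (hQne (m-1) (by omega) (by omega)) hvm'
    rw [hb, hd]
    linear_combination (F m) * E
  rcases le_or_gt m (-(M:ℤ)) with hL | hL
  · -- left edge : a = c = 0
    have ha : u 1 m = 0 := hz 1 m (lt_abs.mpr (Or.inr (by omega)))
    have hc : u 0 (m-1) = 0 := hz 0 (m-1) (lt_abs.mpr (Or.inr (by omega)))
    have hvm := hv m
    rw [ha, hc] at hvm
    have hvm' : t m * (t (ℓ:ℤ) * u (-1) m) = t 0 * (t (m - (ℓ:ℤ)) * u 0 (m+1)) := by
      linear_combination hvm
    have E := keyEdgeL t ℓ m (u (-1) m) (u 0 (m+1)) h0 (htj m (by omega) (by omega))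
      (htj (m+1) (by omega) (by omega)) (hQne m (by omega) (by omega))
      (hQne (m+1) (by omega) (by omega)) hvm'
    rw [ha, hc]
    linear_combination (F m) * E
  · -- generic case
    have E := keyGeneric t ℓ m (u 1 m) (u (-1) m) (u 0 (m-1)) (u 0 (m+1)) h0
      (htj m (by omega) (by omega)) (htj (m-1) (by omega) (by omega))
      (htj (m+1) (by omega) (by omega)) (hQne m (by omega) (by omega))
      (hQne (m-1) (by omega) (by omega)) (hQne (m+1) (by omega) (by omega)) (hv m)
    linear_combination (F m) * E

set_option maxHeartbeats 1000000

/-- a finitely supported solution v of ∇v = 0 produces a difference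
operator V = Σ_j V_j(x) e^{jη∂_x} commuting with the difference Lamé operator L. -/
theorem Novikov_solution_gives_commuting_operator
    (τ : ℂ) (hτ : 0 < τ.im) (ℓ : ℕ) (hℓ : 0 < ℓ) (η : ℂ) (M : ℕ) (hM : 0 < M)
    (v : ℂ → ℂ → ℂ)
    (hv : ∀ x y : ℂ,
      theta1 τ (2*y) * (theta1 τ (2*x - 2*(ℓ : ℂ)*η) * v (x + η) y
          + theta1 τ (2*x + 2*(ℓ : ℂ)*η) * v (x - η) y)
        = theta1 τ (2*x) * (theta1 τ (2*y - 2*(ℓ : ℂ)*η) * v x (y + η)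
          + theta1 τ (2*y + 2*(ℓ : ℂ)*η) * v x (y - η)))
    (hsupp : ∀ j : ℤ, (M : ℤ) < |j| → ∀ x : ℂ, v x (x + (j : ℂ)*η) = 0) :
    ∀ f : ℂ → ℂ, ∀ x : ℂ,
      theta1 τ (2*x) ≠ 0 →
      domVcoef τ η ℓ M (x + η) → domVcoef τ η ℓ M (x - η) → domVcoef τ η ℓ M x →
      (∀ j ∈ Finset.Icc (-(M : ℤ)) (M : ℤ), theta1 τ (2*(x + (j : ℂ)*η)) ≠ 0) →
      (theta1 τ (2*x - 2*(ℓ : ℂ)*η) *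
          (∑ j ∈ Finset.Icc (-(M : ℤ)) (M : ℤ),
            Vcoef τ η ℓ v j (x + η) * f (x + η + (j : ℂ)*η))
        + theta1 τ (2*x + 2*(ℓ : ℂ)*η) *
          (∑ j ∈ Finset.Icc (-(M : ℤ)) (M : ℤ),
            Vcoef τ η ℓ v j (x - η) * f (x - η + (j : ℂ)*η))) / theta1 τ (2*x)
      = ∑ j ∈ Finset.Icc (-(M : ℤ)) (M : ℤ), Vcoef τ η ℓ v j x *
          ((theta1 τ (2*(x + (j : ℂ)*η) - 2*(ℓ : ℂ)*η) * f (x + (j : ℂ)*η + η)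
            + theta1 τ (2*(x + (j : ℂ)*η) + 2*(ℓ : ℂ)*η) * f (x + (j : ℂ)*η - η))
            / theta1 τ (2*(x + (j : ℂ)*η))) := by
  intro f x hθ0 hdomp hdomm hdomc hθj
  set t : ℤ → ℂ := fun n => theta1 τ (2*x + 2*((n:ℤ):ℂ)*η) with ht
  set u : ℤ → ℤ → ℂ := fun i j => v (x + ((i:ℤ):ℂ)*η) (x + ((j:ℤ):ℂ)*η) with hu
  set F : ℤ → ℂ := fun j => f (x + ((j:ℤ):ℂ)*η) with hF
  have tdef : ∀ (n : ℤ) (z : ℂ), z = 2*x + 2*((n:ℤ):ℂ)*η → theta1 τ z = t n := by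
    intro n z h; rw [h, ht]
  have udef : ∀ (i j : ℤ) (z w : ℂ), z = x + ((i:ℤ):ℂ)*η → w = x + ((j:ℤ):ℂ)*η →
      v z w = u i j := by
    intro i j z w h1 h2; rw [h1, h2, hu]
  have Fdef : ∀ (j : ℤ) (w : ℂ), w = x + ((j:ℤ):ℂ)*η → f w = F j := by
    intro j w h; rw [h, hF]
  -- conversions
  have hA : theta1 τ (2*x - 2*(ℓ:ℂ)*η) = t (-(ℓ:ℤ)) := tdef _ _ (by push_cast; ring)
  have hB : theta1 τ (2*x + 2*(ℓ:ℂ)*η) = t (ℓ:ℤ) := tdef _ _ (by push_cast; ring)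
  have hC : theta1 τ (2*x) = t 0 := tdef _ _ (by push_cast; ring)
  have hS1 : ∑ j ∈ Finset.Icc (-(M:ℤ)) (M:ℤ), Vcoef τ η ℓ v j (x + η) * f (x + η + (j:ℂ)*η)
      = ∑ j ∈ Finset.Icc (-(M:ℤ)) (M:ℤ),
          u 1 (j+1) / (∏ k ∈ Finset.Icc 1 ℓ, t (j+1-(k:ℤ)) * t (j+1+(k:ℤ))) * F (j+1) := by
    refine Finset.sum_congr rfl fun j hj => ?_
    simp only [Vcoef]
    rw [udef 1 (j+1) (x+η) (x+η+(j:ℂ)*η) (by push_cast; ring) (by push_cast; ring),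
      Fdef (j+1) (x+η+(j:ℂ)*η) (by push_cast; ring)]
    rw [show (∏ k ∈ Finset.Icc 1 ℓ,
        (theta1 τ (2*(x+η) + 2*((j:ℂ)-(k:ℂ))*η) * theta1 τ (2*(x+η) + 2*((j:ℂ)+(k:ℂ))*η)))
        = ∏ k ∈ Finset.Icc 1 ℓ, t (j+1-(k:ℤ)) * t (j+1+(k:ℤ)) from
      Finset.prod_congr rfl fun k hk => by
        rw [tdef (j+1-(k:ℤ)) _ (by push_cast; ring), tdef (j+1+(k:ℤ)) _ (by push_cast; ring)]]
  have hS2 : ∑ j ∈ Finset.Icc (-(M:ℤ)) (M:ℤ), Vcoef τ η ℓ v j (x - η) * f (x - η + (j:ℂ)*η)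
      = ∑ j ∈ Finset.Icc (-(M:ℤ)) (M:ℤ),
          u (-1) (j-1) / (∏ k ∈ Finset.Icc 1 ℓ, t (j-1-(k:ℤ)) * t (j-1+(k:ℤ))) * F (j-1) := by
    refine Finset.sum_congr rfl fun j hj => ?_
    simp only [Vcoef]
    rw [udef (-1) (j-1) (x-η) (x-η+(j:ℂ)*η) (by push_cast; ring) (by push_cast; ring),
      Fdef (j-1) (x-η+(j:ℂ)*η) (by push_cast; ring)]
    rw [show (∏ k ∈ Finset.Icc 1 ℓ,
        (theta1 τ (2*(x-η) + 2*((j:ℂ)-(k:ℂ))*η) * theta1 τ (2*(x-η) + 2*((j:ℂ)+(k:ℂ))*η)))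
        = ∏ k ∈ Finset.Icc 1 ℓ, t (j-1-(k:ℤ)) * t (j-1+(k:ℤ)) from
      Finset.prod_congr rfl fun k hk => by
        rw [tdef (j-1-(k:ℤ)) _ (by push_cast; ring), tdef (j-1+(k:ℤ)) _ (by push_cast; ring)]]
  have hS3 : ∑ j ∈ Finset.Icc (-(M:ℤ)) (M:ℤ), Vcoef τ η ℓ v j x *
          ((theta1 τ (2*(x + (j:ℂ)*η) - 2*(ℓ:ℂ)*η) * f (x + (j:ℂ)*η + η)
            + theta1 τ (2*(x + (j:ℂ)*η) + 2*(ℓ:ℂ)*η) * f (x + (j:ℂ)*η - η))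
            / theta1 τ (2*(x + (j:ℂ)*η)))
      = ∑ j ∈ Finset.Icc (-(M:ℤ)) (M:ℤ),
          u 0 j / (∏ k ∈ Finset.Icc 1 ℓ, t (j-(k:ℤ)) * t (j+(k:ℤ))) *
            ((t (j - (ℓ:ℤ)) * F (j+1) + t (j + (ℓ:ℤ)) * F (j-1)) / t j) := by
    refine Finset.sum_congr rfl fun j hj => ?_
    simp only [Vcoef]
    rw [udef 0 j x (x+(j:ℂ)*η) (by push_cast; ring) (by push_cast; ring),
      Fdef (j+1) (x+(j:ℂ)*η+η) (by push_cast; ring),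
      Fdef (j-1) (x+(j:ℂ)*η-η) (by push_cast; ring),
      tdef (j-(ℓ:ℤ)) (2*(x+(j:ℂ)*η) - 2*(ℓ:ℂ)*η) (by push_cast; ring),
      tdef (j+(ℓ:ℤ)) (2*(x+(j:ℂ)*η) + 2*(ℓ:ℂ)*η) (by push_cast; ring),
      tdef j (2*(x+(j:ℂ)*η)) (by push_cast; ring)]
    rw [show (∏ k ∈ Finset.Icc 1 ℓ,
        (theta1 τ (2*x + 2*((j:ℂ)-(k:ℂ))*η) * theta1 τ (2*x + 2*((j:ℂ)+(k:ℂ))*η)))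
        = ∏ k ∈ Finset.Icc 1 ℓ, t (j-(k:ℤ)) * t (j+(k:ℤ)) from
      Finset.prod_congr rfl fun k hk => by
        rw [tdef (j-(k:ℤ)) _ (by push_cast; ring), tdef (j+(k:ℤ)) _ (by push_cast; ring)]]
  rw [hA, hB, hC, hS1, hS2, hS3]
  refine bigstep ℓ M hℓ hM t u F ?_ ?_ (hC ▸ hθ0) ?_ ?_ ?_ ?_
  · -- hv instance
    intro m
    have h := hv x (x + (m:ℂ)*η)
    rw [tdef m (2*(x + (m:ℂ)*η)) (by push_cast; ring),
      tdef (m-(ℓ:ℤ)) (2*(x + (m:ℂ)*η) - 2*(ℓ:ℂ)*η) (by push_cast; ring),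
      tdef (m+(ℓ:ℤ)) (2*(x + (m:ℂ)*η) + 2*(ℓ:ℂ)*η) (by push_cast; ring),
      hA, hB, hC,
      udef 1 m (x+η) (x+(m:ℂ)*η) (by push_cast; ring) (by push_cast; ring),
      udef (-1) m (x-η) (x+(m:ℂ)*η) (by push_cast; ring) (by push_cast; ring),
      udef 0 (m+1) x (x+(m:ℂ)*η+η) (by push_cast; ring) (by push_cast; ring),
      udef 0 (m-1) x (x+(m:ℂ)*η-η) (by push_cast; ring) (by push_cast; ring)] at h
    exact h
  · -- hz instance
    intro i j h
    have h0 := hsupp (j - i) h (x + (i:ℂ)*η)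
    rw [udef i j (x + (i:ℂ)*η) ((x + (i:ℂ)*η) + ((j-i:ℤ):ℂ)*η) (by push_cast; ring)
      (by push_cast; ring)] at h0
    exact h0
  · -- hdp
    intro j hj k hk
    obtain ⟨h1, h2⟩ := hdomp j hj k hk
    exact ⟨tdef (j+1-(k:ℤ)) (2*(x+η) + 2*((j:ℂ)-(k:ℂ))*η) (by push_cast; ring) ▸ h1,
      tdef (j+1+(k:ℤ)) (2*(x+η) + 2*((j:ℂ)+(k:ℂ))*η) (by push_cast; ring) ▸ h2⟩
  · intro j hj k hk
    obtain ⟨h1, h2⟩ := hdomm j hj k hk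
    exact ⟨tdef (j-1-(k:ℤ)) (2*(x-η) + 2*((j:ℂ)-(k:ℂ))*η) (by push_cast; ring) ▸ h1,
      tdef (j-1+(k:ℤ)) (2*(x-η) + 2*((j:ℂ)+(k:ℂ))*η) (by push_cast; ring) ▸ h2⟩
  · intro j hj k hk
    obtain ⟨h1, h2⟩ := hdomc j hj k hk
    exact ⟨tdef (j-(k:ℤ)) (2*x + 2*((j:ℂ)-(k:ℂ))*η) (by push_cast; ring) ▸ h1,
      tdef (j+(k:ℤ)) (2*x + 2*((j:ℂ)+(k:ℂ))*η) (by push_cast; ring) ▸ h2⟩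
  · intro j hj
    exact tdef j (2*(x + (j:ℂ)*η)) (by push_cast; ring) ▸ hθj j hj
end

section
/- Let ℓ be a positive integer, τ ∈ ℂ with Im τ > 0, η ∈ ℂ with θ1(2nη) ≠ 0 for all integers 1 ≤ n ≤ 2ℓ, and let m be an integer with 1 ≤ m ≤ ℓ. Then the operators A_{mη} and A_{−mη} coincide: for every function f : ℂ → ℂ and every x ∈ ℂ at which all theta-denominators occurring in the coefficients A_k(x,mη) and A_k(x,−mη) are nonzero, Σ_{k=0}^{ℓ} A_k(x,mη)·f(x+(2k−ℓ+m)η) = Σ_{k=0}^{ℓ} A_k(x,−mη)·f(x+(2k−ℓ−m)η). -/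
open Complex Finset

lemma theta1_odd (τ x : ℂ) : theta1 τ (-x) = - theta1 τ x := by
  unfold theta1
  rw [← tsum_neg]
  rw [← (Equiv.subLeft (-1 : ℤ)).tsum_eq]
  congr 1; funext k
  have hk : ((Equiv.subLeft (-1 : ℤ) k : ℤ) : ℂ) = -1 - (k : ℂ) := by
    simp [Equiv.subLeft]
  rw [hk]
  have h1 : (Real.pi : ℂ) * Complex.I * τ * ((-1 - (k:ℂ)) + 1/2)^2 +
      2 * (Real.pi : ℂ) * Complex.I * (-x + 1/2) * ((-1 - (k:ℂ)) + 1/2)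
      = ((Real.pi : ℂ) * Complex.I * τ * ((k:ℂ) + 1/2)^2 +
        2 * (Real.pi : ℂ) * Complex.I * (x + 1/2) * ((k:ℂ) + 1/2))
        + (-(k:ℤ) : ℤ) * (2 * (Real.pi : ℂ) * Complex.I)
        + (-1 : ℂ) * ((Real.pi : ℂ) * Complex.I) := by
    push_cast; ring
  rw [h1, Complex.exp_add, Complex.exp_add, Complex.exp_int_mul_two_pi_mul_I]
  rw [show (-1 : ℂ) * ((Real.pi : ℂ) * Complex.I) = -((Real.pi:ℂ) * Complex.I) by ring,
    Complex.exp_neg, Complex.exp_pi_mul_I]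
  norm_num

lemma theta1_zero (τ : ℂ) : theta1 τ 0 = 0 := by
  have := theta1_odd τ 0
  rw [neg_zero] at this
  linear_combination this / 2

section
attribute [local irreducible] theta1

lemma prod_en_mul_efact (τ η : ℂ) (a b : ℕ) :
    (∏ j ∈ Finset.range b, en τ η ((a:ℤ) + (b:ℤ) - (j:ℤ))) * efact τ η a
      = efact τ η (a + b) := by
  unfold efact
  rw [Finset.prod_range_add, mul_comm]
  congr 1
  rw [← Finset.prod_range_reflect (fun j => en τ η (((a + j : ℕ) : ℤ) + 1)) b]
  apply Finset.prod_congr rfl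
  intro j hj
  simp only [Finset.mem_range] at hj
  congr 1
  omega

lemma efact_ne_zero (τ η : ℂ) (ℓ : ℕ)
    (hη : ∀ n : ℕ, 1 ≤ n → n ≤ 2*ℓ → theta1 τ (2*(n : ℂ)*η) ≠ 0)
    (n : ℕ) (hn : n ≤ 2*ℓ) : efact τ η n ≠ 0 := by
  unfold efact
  rw [Finset.prod_ne_zero_iff]
  intro j hj
  simp only [Finset.mem_range] at hj
  have := hη (j+1) (by omega) (by omega)
  have harg : (2*((j+1 : ℕ) : ℂ)*η) = 2 * (((j:ℤ) + 1 : ℤ) : ℂ) * η := by push_cast; ring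
  rw [harg] at this
  exact this

lemma assemble (g F a b c d E1 E2a E1' E2b s t : ℂ) (k m : ℕ)
    (ha : a ≠ 0) (hb : b ≠ 0) (hc : c ≠ 0) (hd : d ≠ 0)
    (h : E1 * c * (E2a * d) = E1' * a * (E2b * b)) :
    (-1:ℂ)^k * g * (F/(a*b)) * (E1 * s) * ((-1:ℂ)^k * E2a * t)
      = (-1:ℂ)^(k+m) * g * (F/(c*d)) * (E1' * s) * ((-1:ℂ)^(k+m) * E2b * t) := by
  have hk : ((-1:ℂ))^k * ((-1:ℂ))^k = 1 := by rw [← mul_pow]; norm_num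
  have hkm : ((-1:ℂ))^(k+m) * ((-1:ℂ))^(k+m) = 1 := by rw [← mul_pow]; norm_num
  have key : F/(a*b) * (E1 * E2a) = F/(c*d) * (E1' * E2b) := by
    rw [div_mul_eq_mul_div, div_mul_eq_mul_div,
      div_eq_div_iff (mul_ne_zero ha hb) (mul_ne_zero hc hd)]
    linear_combination F * h
  calc (-1:ℂ)^k * g * (F/(a*b)) * (E1 * s) * ((-1:ℂ)^k * E2a * t)
      = ((-1:ℂ)^k * (-1:ℂ)^k) * (g * s * t) * (F/(a*b) * (E1 * E2a)) := by ring
    _ = ((-1:ℂ)^(k+m) * (-1:ℂ)^(k+m)) * (g * s * t) * (F/(c*d) * (E1' * E2b)) := by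
        rw [hk, hkm, key]
    _ = (-1:ℂ)^(k+m) * g * (F/(c*d)) * (E1' * s) * ((-1:ℂ)^(k+m) * E2b * t) := by ring

lemma assemble2 (g F a b c d E1 E2a E1' E2b N1' D1' N2 D2 X Y : ℂ) (k m : ℕ)
    (hX : X ≠ 0) (hY : Y ≠ 0)
    (ha : a ≠ 0) (hb : b ≠ 0) (hc : c ≠ 0) (hd : d ≠ 0)
    (h : E1 * c * (E2a * d) = E1' * a * (E2b * b)) :
    (-1:ℂ)^k * g * (F/(a*b)) * ((N1' * X) * E1 / (X * D1')) * (N2 * ((-1:ℂ)^k * E2a) / D2)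
      = (-1:ℂ)^(k+m) * g * (F/(c*d)) * (N1' * E1' / D1')
          * ((N2 * Y) * ((-1:ℂ)^(k+m) * E2b) / (Y * D2)) := by
  have e1 : (N1' * X) * E1 / (X * D1') = E1 * (N1' / D1') := by
    rw [show (N1' * X) * E1 = (E1 * N1') * X by ring, show X * D1' = D1' * X from mul_comm _ _,
      mul_div_mul_right _ _ hX, mul_div_assoc]
  have e2 : N2 * ((-1:ℂ)^k * E2a) / D2 = (-1:ℂ)^k * E2a * (N2 / D2) := by
    rw [mul_comm N2 _, mul_div_assoc]
  have e3 : N1' * E1' / D1' = E1' * (N1' / D1') := by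
    rw [mul_comm N1' _, mul_div_assoc]
  have e4 : (N2 * Y) * ((-1:ℂ)^(k+m) * E2b) / (Y * D2)
      = (-1:ℂ)^(k+m) * E2b * (N2 / D2) := by
    rw [show (N2 * Y) * ((-1:ℂ)^(k+m) * E2b) = (((-1:ℂ)^(k+m) * E2b) * N2) * Y by ring,
      show Y * D2 = D2 * Y from mul_comm _ _, mul_div_mul_right _ _ hY, mul_div_assoc]
  rw [e1, e2, e3, e4]
  exact assemble g F a b c d E1 E2a E1' E2b (N1'/D1') (N2/D2) k m ha hb hc hd h
lemma Acoef_shift (τ η x : ℂ) (ℓ k m : ℕ) (hm1 : 1 ≤ m) (hkm : k + m ≤ ℓ)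
    (hη : ∀ n : ℕ, 1 ≤ n → n ≤ 2*ℓ → theta1 τ (2*(n : ℂ)*η) ≠ 0)
    (hX : ∀ i, i < m → theta1 τ (2*x + 2*((k:ℂ) + 1 + (i:ℂ))*η) ≠ 0)
    (hY : ∀ i, i < m → theta1 τ (2*x + 2*((k:ℂ) + (i:ℂ) - (ℓ:ℂ))*η) ≠ 0) :
    Acoef τ η ℓ k x ((m:ℂ)*η) = Acoef τ η ℓ (k+m) x (-((m:ℂ)*η)) := by
  have hkl : k ≤ ℓ := by omega
  have hcastlkm : ((ℓ - (k+m) : ℕ) : ℂ) = (ℓ:ℂ) - (k:ℂ) - (m:ℂ) := by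
    push_cast [Nat.cast_sub hkm]; ring
  -- the four product identities
  have hP1L : (∏ j ∈ Finset.range (ℓ - k),
      theta1 τ (2*x + 2*((ℓ : ℂ) - (j : ℂ))*η)
        * theta1 τ (2*((m:ℂ)*η) + 2*((ℓ : ℂ) - (j : ℂ))*η) /
        theta1 τ (2*x + 2*((m:ℂ)*η) + 2*((k : ℂ) - (j : ℂ))*η))
      = ((∏ j ∈ Finset.range (ℓ - (k+m)), theta1 τ (2*x + 2*((ℓ:ℂ) - (j:ℂ))*η))
          * ∏ i ∈ Finset.range m, theta1 τ (2*x + 2*((k:ℂ) + 1 + (i:ℂ))*η))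
        * (∏ j ∈ Finset.range (ℓ - k), en τ η (((k+m:ℕ):ℤ) + ((ℓ-k:ℕ):ℤ) - (j:ℤ)))
        / ((∏ i ∈ Finset.range m, theta1 τ (2*x + 2*((k:ℂ) + 1 + (i:ℂ))*η))
          * ∏ j ∈ Finset.range (ℓ - (k+m)), theta1 τ (2*x + 2*((k:ℂ) - (j:ℂ))*η)) := by
    rw [Finset.prod_div_distrib, Finset.prod_mul_distrib]
    have hA : (∏ j ∈ Finset.range (ℓ - k), theta1 τ (2*x + 2*((ℓ:ℂ) - (j:ℂ))*η))
        = (∏ j ∈ Finset.range (ℓ - (k+m)), theta1 τ (2*x + 2*((ℓ:ℂ) - (j:ℂ))*η))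
          * ∏ i ∈ Finset.range m, theta1 τ (2*x + 2*((k:ℂ) + 1 + (i:ℂ))*η) := by
      rw [show ℓ - k = (ℓ - (k+m)) + m from by omega, Finset.prod_range_add]
      congr 1
      rw [← Finset.prod_range_reflect (fun i => theta1 τ (2*x + 2*((k:ℂ) + 1 + (i:ℂ))*η)) m]
      apply Finset.prod_congr rfl
      intro i hi
      simp only [Finset.mem_range] at hi
      congr 1
      push_cast [hcastlkm, Nat.cast_sub (show i ≤ m - 1 by omega),
        Nat.cast_sub (show 1 ≤ m from hm1)]
      ring
    have hB : (∏ j ∈ Finset.range (ℓ - k), theta1 τ (2*((m:ℂ)*η) + 2*((ℓ:ℂ) - (j:ℂ))*η))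
        = ∏ j ∈ Finset.range (ℓ - k), en τ η (((k+m:ℕ):ℤ) + ((ℓ-k:ℕ):ℤ) - (j:ℤ)) := by
      apply Finset.prod_congr rfl
      intro j hj
      simp only [Finset.mem_range] at hj
      simp only [en]
      congr 1
      push_cast [Nat.cast_sub hkl]
      ring
    have hC : (∏ j ∈ Finset.range (ℓ - k), theta1 τ (2*x + 2*((m:ℂ)*η) + 2*((k:ℂ) - (j:ℂ))*η))
        = (∏ i ∈ Finset.range m, theta1 τ (2*x + 2*((k:ℂ) + 1 + (i:ℂ))*η))
          * ∏ j ∈ Finset.range (ℓ - (k+m)), theta1 τ (2*x + 2*((k:ℂ) - (j:ℂ))*η) := by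
      rw [show ℓ - k = m + (ℓ - (k+m)) from by omega, Finset.prod_range_add]
      congr 1
      · rw [← Finset.prod_range_reflect (fun i => theta1 τ (2*x + 2*((k:ℂ) + 1 + (i:ℂ))*η)) m]
        apply Finset.prod_congr rfl
        intro i hi
        simp only [Finset.mem_range] at hi
        congr 1
        push_cast [Nat.cast_sub (show i ≤ m - 1 by omega), Nat.cast_sub (show 1 ≤ m from hm1)]
        ring
      · apply Finset.prod_congr rfl
        intro j hj
        congr 1
        push_cast
        ring
    rw [hA, hB, hC]
  have hP2L : (∏ j ∈ Finset.range k,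
      theta1 τ (2*x - 2*((ℓ : ℂ) - (j : ℂ))*η)
        * theta1 τ (2*((m:ℂ)*η) - 2*((ℓ : ℂ) - (j : ℂ))*η) /
        theta1 τ (2*x + 2*((m:ℂ)*η) + 2*((k : ℂ) + (j : ℂ) - (ℓ : ℂ))*η))
      = (∏ j ∈ Finset.range k, theta1 τ (2*x - 2*((ℓ:ℂ) - (j:ℂ))*η))
        * ((-1:ℂ)^k * ∏ j ∈ Finset.range k, en τ η (((ℓ-(k+m):ℕ):ℤ) + (k:ℤ) - (j:ℤ)))
        / ∏ j ∈ Finset.range k, theta1 τ (2*x + 2*((k:ℂ) + (m:ℂ) + (j:ℂ) - (ℓ:ℂ))*η) := by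
    rw [Finset.prod_div_distrib, Finset.prod_mul_distrib]
    have hB : (∏ j ∈ Finset.range k, theta1 τ (2*((m:ℂ)*η) - 2*((ℓ:ℂ) - (j:ℂ))*η))
        = (-1:ℂ)^k * ∏ j ∈ Finset.range k, en τ η (((ℓ-(k+m):ℕ):ℤ) + (k:ℤ) - (j:ℤ)) := by
      have : ∀ j ∈ Finset.range k,
          theta1 τ (2*((m:ℂ)*η) - 2*((ℓ:ℂ) - (j:ℂ))*η)
            = (-1:ℂ) * en τ η (((ℓ-(k+m):ℕ):ℤ) + (k:ℤ) - (j:ℤ)) := by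
        intro j hj
        have harg : 2*((m:ℂ)*η) - 2*((ℓ:ℂ) - (j:ℂ))*η
            = -(2 * (((((ℓ-(k+m):ℕ):ℤ) + (k:ℤ) - (j:ℤ)) : ℤ) : ℂ) * η) := by
          push_cast [hcastlkm]
          ring
        rw [harg, theta1_odd, en]
        ring
      rw [Finset.prod_congr rfl this, Finset.prod_mul_distrib, Finset.prod_const,
        Finset.card_range]
    have hC : (∏ j ∈ Finset.range k, theta1 τ (2*x + 2*((m:ℂ)*η) + 2*((k:ℂ) + (j:ℂ) - (ℓ:ℂ))*η))
        = ∏ j ∈ Finset.range k, theta1 τ (2*x + 2*((k:ℂ) + (m:ℂ) + (j:ℂ) - (ℓ:ℂ))*η) := by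
      apply Finset.prod_congr rfl
      intro j hj
      congr 1
      ring
    rw [hB, hC]
  have hP1R : (∏ j ∈ Finset.range (ℓ - (k+m)),
      theta1 τ (2*x + 2*((ℓ : ℂ) - (j : ℂ))*η)
        * theta1 τ (2*(-((m:ℂ)*η)) + 2*((ℓ : ℂ) - (j : ℂ))*η) /
        theta1 τ (2*x + 2*(-((m:ℂ)*η)) + 2*(((k+m:ℕ) : ℂ) - (j : ℂ))*η))
      = (∏ j ∈ Finset.range (ℓ - (k+m)), theta1 τ (2*x + 2*((ℓ:ℂ) - (j:ℂ))*η))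
        * (∏ j ∈ Finset.range (ℓ - (k+m)), en τ η ((k:ℤ) + ((ℓ-(k+m):ℕ):ℤ) - (j:ℤ)))
        / ∏ j ∈ Finset.range (ℓ - (k+m)), theta1 τ (2*x + 2*((k:ℂ) - (j:ℂ))*η) := by
    rw [Finset.prod_div_distrib, Finset.prod_mul_distrib]
    have hB : (∏ j ∈ Finset.range (ℓ - (k+m)),
        theta1 τ (2*(-((m:ℂ)*η)) + 2*((ℓ:ℂ) - (j:ℂ))*η))
        = ∏ j ∈ Finset.range (ℓ - (k+m)), en τ η ((k:ℤ) + ((ℓ-(k+m):ℕ):ℤ) - (j:ℤ)) := by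
      apply Finset.prod_congr rfl
      intro j hj
      simp only [en]
      congr 1
      push_cast [hcastlkm]
      ring
    have hC : (∏ j ∈ Finset.range (ℓ - (k+m)),
        theta1 τ (2*x + 2*(-((m:ℂ)*η)) + 2*(((k+m:ℕ):ℂ) - (j:ℂ))*η))
        = ∏ j ∈ Finset.range (ℓ - (k+m)), theta1 τ (2*x + 2*((k:ℂ) - (j:ℂ))*η) := by
      apply Finset.prod_congr rfl
      intro j hj
      congr 1
      push_cast
      ring
    rw [hB, hC]
  have hP2R : (∏ j ∈ Finset.range (k+m),
      theta1 τ (2*x - 2*((ℓ : ℂ) - (j : ℂ))*η)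
        * theta1 τ (2*(-((m:ℂ)*η)) - 2*((ℓ : ℂ) - (j : ℂ))*η) /
        theta1 τ (2*x + 2*(-((m:ℂ)*η)) + 2*(((k+m:ℕ) : ℂ) + (j : ℂ) - (ℓ : ℂ))*η))
      = ((∏ j ∈ Finset.range k, theta1 τ (2*x - 2*((ℓ:ℂ) - (j:ℂ))*η))
          * ∏ i ∈ Finset.range m, theta1 τ (2*x + 2*((k:ℂ) + (i:ℂ) - (ℓ:ℂ))*η))
        * ((-1:ℂ)^(k+m) * ∏ j ∈ Finset.range (k+m), en τ η (((ℓ-k:ℕ):ℤ) + ((k+m:ℕ):ℤ) - (j:ℤ)))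
        / ((∏ i ∈ Finset.range m, theta1 τ (2*x + 2*((k:ℂ) + (i:ℂ) - (ℓ:ℂ))*η))
          * ∏ j ∈ Finset.range k, theta1 τ (2*x + 2*((k:ℂ) + (m:ℂ) + (j:ℂ) - (ℓ:ℂ))*η)) := by
    rw [Finset.prod_div_distrib, Finset.prod_mul_distrib]
    have hA : (∏ j ∈ Finset.range (k+m), theta1 τ (2*x - 2*((ℓ:ℂ) - (j:ℂ))*η))
        = (∏ j ∈ Finset.range k, theta1 τ (2*x - 2*((ℓ:ℂ) - (j:ℂ))*η))
          * ∏ i ∈ Finset.range m, theta1 τ (2*x + 2*((k:ℂ) + (i:ℂ) - (ℓ:ℂ))*η) := by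
      rw [Finset.prod_range_add]
      congr 1
      apply Finset.prod_congr rfl
      intro i hi
      congr 1
      push_cast
      ring
    have hB : (∏ j ∈ Finset.range (k+m), theta1 τ (2*(-((m:ℂ)*η)) - 2*((ℓ:ℂ) - (j:ℂ))*η))
        = (-1:ℂ)^(k+m) * ∏ j ∈ Finset.range (k+m),
            en τ η (((ℓ-k:ℕ):ℤ) + ((k+m:ℕ):ℤ) - (j:ℤ)) := by
      have : ∀ j ∈ Finset.range (k+m),
          theta1 τ (2*(-((m:ℂ)*η)) - 2*((ℓ:ℂ) - (j:ℂ))*η)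
            = (-1:ℂ) * en τ η (((ℓ-k:ℕ):ℤ) + ((k+m:ℕ):ℤ) - (j:ℤ)) := by
        intro j hj
        have harg : 2*(-((m:ℂ)*η)) - 2*((ℓ:ℂ) - (j:ℂ))*η
            = -(2 * ((((ℓ-k:ℕ):ℤ) + ((k+m:ℕ):ℤ) - (j:ℤ) : ℤ) : ℂ) * η) := by
          push_cast [Nat.cast_sub hkl]
          ring
        rw [harg, theta1_odd, en]
        ring
      rw [Finset.prod_congr rfl this, Finset.prod_mul_distrib, Finset.prod_const,
        Finset.card_range]
    have hC : (∏ j ∈ Finset.range (k+m),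
        theta1 τ (2*x + 2*(-((m:ℂ)*η)) + 2*(((k+m:ℕ):ℂ) + (j:ℂ) - (ℓ:ℂ))*η))
        = (∏ i ∈ Finset.range m, theta1 τ (2*x + 2*((k:ℂ) + (i:ℂ) - (ℓ:ℂ))*η))
          * ∏ j ∈ Finset.range k, theta1 τ (2*x + 2*((k:ℂ) + (m:ℂ) + (j:ℂ) - (ℓ:ℂ))*η) := by
      have step : (∏ j ∈ Finset.range (k+m),
          theta1 τ (2*x + 2*(-((m:ℂ)*η)) + 2*(((k+m:ℕ):ℂ) + (j:ℂ) - (ℓ:ℂ))*η))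
          = ∏ j ∈ Finset.range (k+m), theta1 τ (2*x + 2*((k:ℂ) + (j:ℂ) - (ℓ:ℂ))*η) := by
        apply Finset.prod_congr rfl
        intro j hj
        congr 1
        push_cast
        ring
      rw [step, show k + m = m + k from Nat.add_comm k m, Finset.prod_range_add]
      congr 1
      apply Finset.prod_congr rfl
      intro j hj
      congr 1
      push_cast
      ring
    rw [hA, hB, hC]
  -- nonvanishing
  have hX0 : (∏ i ∈ Finset.range m, theta1 τ (2*x + 2*((k:ℂ) + 1 + (i:ℂ))*η)) ≠ 0 :=
    Finset.prod_ne_zero_iff.mpr (fun i hi => hX i (Finset.mem_range.mp hi))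
  have hY0 : (∏ i ∈ Finset.range m, theta1 τ (2*x + 2*((k:ℂ) + (i:ℂ) - (ℓ:ℂ))*η)) ≠ 0 :=
    Finset.prod_ne_zero_iff.mpr (fun i hi => hY i (Finset.mem_range.mp hi))
  have ha0 : efact τ η k ≠ 0 := efact_ne_zero τ η ℓ hη k (by omega)
  have hb0 : efact τ η (ℓ - k) ≠ 0 := efact_ne_zero τ η ℓ hη (ℓ - k) (by omega)
  have hc0 : efact τ η (k+m) ≠ 0 := efact_ne_zero τ η ℓ hη (k+m) (by omega)
  have hd0 : efact τ η (ℓ - (k+m)) ≠ 0 := efact_ne_zero τ η ℓ hη (ℓ - (k+m)) (by omega)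
  -- the factorial relations
  have hc' := prod_en_mul_efact τ η (k+m) (ℓ-k)
  have hd' := prod_en_mul_efact τ η (ℓ-(k+m)) k
  have ha' := prod_en_mul_efact τ η k (ℓ-(k+m))
  have hb' := prod_en_mul_efact τ η (ℓ-k) (k+m)
  rw [show (k+m) + (ℓ-k) = ℓ+m from by omega] at hc'
  rw [show (ℓ-(k+m)) + k = ℓ-m from by omega] at hd'
  rw [show k + (ℓ-(k+m)) = ℓ-m from by omega] at ha'
  rw [show (ℓ-k) + (k+m) = ℓ+m from by omega] at hb'
  have hcross : (∏ j ∈ Finset.range (ℓ - k), en τ η (((k+m:ℕ):ℤ) + ((ℓ-k:ℕ):ℤ) - (j:ℤ)))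
        * efact τ η (k+m)
        * ((∏ j ∈ Finset.range k, en τ η (((ℓ-(k+m):ℕ):ℤ) + (k:ℤ) - (j:ℤ)))
          * efact τ η (ℓ - (k+m)))
      = (∏ j ∈ Finset.range (ℓ - (k+m)), en τ η ((k:ℤ) + ((ℓ-(k+m):ℕ):ℤ) - (j:ℤ)))
          * efact τ η k
        * ((∏ j ∈ Finset.range (k+m), en τ η (((ℓ-k:ℕ):ℤ) + ((k+m:ℕ):ℤ) - (j:ℤ)))
          * efact τ η (ℓ - k)) := by
    rw [hc', hd', ha', hb']
    ring
  unfold Acoef ebinom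
  rw [hP1L, hP2L, hP1R, hP2R]
  exact assemble2 (efact τ η ℓ / efact τ η (2*ℓ)) (efact τ η ℓ)
    (efact τ η k) (efact τ η (ℓ-k)) (efact τ η (k+m)) (efact τ η (ℓ-(k+m)))
    _ _ _ _ _ _ _ _ _ _ k m hX0 hY0 ha0 hb0 hc0 hd0 hcross

lemma Acoef_eq_zero_left (τ η x : ℂ) (ℓ k m : ℕ) (hm2 : m ≤ ℓ) (hk : ℓ - m < k) :
    Acoef τ η ℓ k x ((m:ℂ)*η) = 0 := by
  unfold Acoef
  have hz : theta1 τ (2*x - 2*((ℓ:ℂ) - ((ℓ-m : ℕ):ℂ))*η)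
      * theta1 τ (2*((m:ℂ)*η) - 2*((ℓ:ℂ) - ((ℓ-m : ℕ):ℂ))*η) /
      theta1 τ (2*x + 2*((m:ℂ)*η) + 2*((k:ℂ) + ((ℓ-m : ℕ):ℂ) - (ℓ:ℂ))*η) = 0 := by
    rw [show 2*((m:ℂ)*η) - 2*((ℓ:ℂ) - ((ℓ-m : ℕ):ℂ))*η = 0 from by
      push_cast [Nat.cast_sub hm2]; ring]
    rw [theta1_zero, mul_zero, zero_div]
  rw [Finset.prod_eq_zero (Finset.mem_range.mpr hk) hz, mul_zero]

lemma Acoef_eq_zero_right (τ η x : ℂ) (ℓ k m : ℕ) (hm2 : m ≤ ℓ) (hk : k < m) :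
    Acoef τ η ℓ k x (-((m:ℂ)*η)) = 0 := by
  unfold Acoef
  have hmem : ℓ - m ∈ Finset.range (ℓ - k) := Finset.mem_range.mpr (by omega)
  have hz : theta1 τ (2*x + 2*((ℓ:ℂ) - ((ℓ-m : ℕ):ℂ))*η)
      * theta1 τ (2*(-((m:ℂ)*η)) + 2*((ℓ:ℂ) - ((ℓ-m : ℕ):ℂ))*η) /
      theta1 τ (2*x + 2*(-((m:ℂ)*η)) + 2*((k:ℂ) - ((ℓ-m : ℕ):ℂ))*η) = 0 := by
    rw [show 2*(-((m:ℂ)*η)) + 2*((ℓ:ℂ) - ((ℓ-m : ℕ):ℂ))*η = 0 from by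
      push_cast [Nat.cast_sub hm2]; ring]
    rw [theta1_zero, mul_zero, zero_div]
  rw [Finset.prod_eq_zero hmem hz, mul_zero, zero_mul]

/-- for integer 1 ≤ m ≤ ℓ the operators A_{mη} and A_{−mη} coincide. -/
theorem Aop_even
    (τ : ℂ) (hτ : 0 < τ.im) (ℓ : ℕ) (hℓ : 0 < ℓ) (η : ℂ)
    (hη : ∀ n : ℕ, 1 ≤ n → n ≤ 2*ℓ → theta1 τ (2*(n : ℂ)*η) ≠ 0)
    (m : ℕ) (hm1 : 1 ≤ m) (hm2 : m ≤ ℓ) :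
    ∀ f : ℂ → ℂ, ∀ x : ℂ,
      domAcoef τ η ℓ x ((m : ℂ)*η) → domAcoef τ η ℓ x (-((m : ℂ)*η)) →
      ∑ k ∈ Finset.range (ℓ + 1),
          Acoef τ η ℓ k x ((m : ℂ)*η) * f (x + (2*(k : ℂ) - (ℓ : ℂ) + (m : ℂ))*η)
        = ∑ k ∈ Finset.range (ℓ + 1),
            Acoef τ η ℓ k x (-((m : ℂ)*η)) * f (x + (2*(k : ℂ) - (ℓ : ℂ) - (m : ℂ))*η) := by
  intro f x hdom1 hdom2
  unfold domAcoef at hdom1 hdom2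
  have hL : ∑ k ∈ Finset.range (ℓ + 1),
      Acoef τ η ℓ k x ((m : ℂ)*η) * f (x + (2*(k : ℂ) - (ℓ : ℂ) + (m : ℂ))*η)
      = ∑ i ∈ Finset.range (ℓ + 1 - m),
        Acoef τ η ℓ i x ((m : ℂ)*η) * f (x + (2*(i : ℂ) - (ℓ : ℂ) + (m : ℂ))*η) := by
    conv_lhs => rw [show ℓ + 1 = (ℓ + 1 - m) + m from by omega, Finset.sum_range_add]
    have : ∀ i ∈ Finset.range m,
        Acoef τ η ℓ ((ℓ + 1 - m) + i) x ((m : ℂ)*η)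
          * f (x + (2*(((ℓ + 1 - m) + i : ℕ) : ℂ) - (ℓ : ℂ) + (m : ℂ))*η) = 0 := by
      intro i hi
      rw [Acoef_eq_zero_left τ η x ℓ _ m hm2 (by omega), zero_mul]
    rw [Finset.sum_congr rfl this, Finset.sum_const, smul_zero, add_zero]
  have hR : ∑ k ∈ Finset.range (ℓ + 1),
      Acoef τ η ℓ k x (-((m : ℂ)*η)) * f (x + (2*(k : ℂ) - (ℓ : ℂ) - (m : ℂ))*η)
      = ∑ i ∈ Finset.range (ℓ + 1 - m),
        Acoef τ η ℓ (m + i) x (-((m : ℂ)*η))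
          * f (x + (2*(((m + i : ℕ)) : ℂ) - (ℓ : ℂ) - (m : ℂ))*η) := by
    conv_lhs => rw [show ℓ + 1 = m + (ℓ + 1 - m) from by omega, Finset.sum_range_add]
    have : ∀ i ∈ Finset.range m,
        Acoef τ η ℓ i x (-((m : ℂ)*η)) * f (x + (2*(i : ℂ) - (ℓ : ℂ) - (m : ℂ))*η) = 0 := by
      intro i hi
      simp only [Finset.mem_range] at hi
      rw [Acoef_eq_zero_right τ η x ℓ i m hm2 hi, zero_mul]
    rw [Finset.sum_congr rfl this, Finset.sum_const, smul_zero, zero_add]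
  rw [hL, hR]
  apply Finset.sum_congr rfl
  intro i hi
  simp only [Finset.mem_range] at hi
  have him : i + m ≤ ℓ := by omega
  have hXe : ∀ t, t < m → theta1 τ (2*x + 2*((i:ℂ) + 1 + (t:ℂ))*η) ≠ 0 := by
    intro t ht
    have h1 := (hdom1 i (Finset.mem_range.mpr (by omega))).1 (m - 1 - t)
      (Finset.mem_range.mpr (by omega))
    have harg : 2*x + 2*((m:ℂ)*η) + 2*((i:ℂ) - ((m - 1 - t : ℕ):ℂ))*η
        = 2*x + 2*((i:ℂ) + 1 + (t:ℂ))*η := by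
      push_cast [Nat.cast_sub (show t ≤ m - 1 by omega), Nat.cast_sub (show 1 ≤ m from hm1)]
      ring
    rw [harg] at h1
    exact h1
  have hYe : ∀ t, t < m → theta1 τ (2*x + 2*((i:ℂ) + (t:ℂ) - (ℓ:ℂ))*η) ≠ 0 := by
    intro t ht
    have h1 := (hdom2 (i + m) (Finset.mem_range.mpr (by omega))).2 t
      (Finset.mem_range.mpr (by omega))
    have harg : 2*x + 2*(-((m:ℂ)*η)) + 2*(((i + m : ℕ):ℂ) + (t:ℂ) - (ℓ:ℂ))*η
        = 2*x + 2*((i:ℂ) + (t:ℂ) - (ℓ:ℂ))*η := by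
      push_cast; ring
    rw [harg] at h1
    exact h1
  rw [show m + i = i + m from Nat.add_comm m i,
    ← Acoef_shift τ η x ℓ i m hm1 him hη hXe hYe]
  congr 2
  push_cast
  ring

end
end
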